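/- If U contains elements u, v, w that are pairwise non-±-equal (u ≠ ±v, u ≠ ±w, v ≠ ±w), then R(U) equals the set of finite integer linear combinations of monomials of U. -/

import Mathlib

open Complex

/-- The bracket `[x,y] = x * conj y - y * conj x`. -/
noncomputable def brkt (x y : ℂ) : ℂ := x * (starRingEnd ℂ) y - y * (starRingEnd ℂ) x

/-- `lineInt α β p q` is the intersection point `I_{α,β}(p,q)` of the line through `p`
with direction `α` and the line through `q` with direction `β` (for unit `α ≠ ±β`),
given by the formula of Buhler et al. -/
noncomputable def lineInt (α β p q : ℂ) : ℂ :=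
  brkt α p / brkt α β * β + brkt β q / brkt β α * α

/-- The sets `S n` in the inductive construction. -/
def stepSet (U : Set ℂ) : ℕ → Set ℂ
  | 0 => {0, 1}
  | n + 1 => {z | ∃ α ∈ U, ∃ β ∈ U, α ≠ β ∧ α ≠ -β ∧
      ∃ p ∈ stepSet U n, ∃ q ∈ stepSet U n, z = lineInt α β p q}

/-- `RU U = ⋃ n, S n`. -/
def RU (U : Set ℂ) : Set ℂ := ⋃ n, stepSet U n

/-- Elementary monomials of `U`. -/
def IsElem (U : Set ℂ) (z : ℂ) : Prop :=
  ∃ α ∈ U, ∃ β ∈ U, α ≠ β ∧ α ≠ -β ∧ z = lineInt α β 0 1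

/-- Monomials of `U`, defined inductively. -/
inductive IsMonomial (U : Set ℂ) : ℂ → Prop
  | elementary (α β : ℂ) (hα : α ∈ U) (hβ : β ∈ U) (h1 : α ≠ β) (h2 : α ≠ -β) :
      IsMonomial U (lineInt α β 0 1)
  | step (α β m : ℂ) (hα : α ∈ U) (hβ : β ∈ U) (h1 : α ≠ β) (h2 : α ≠ -β)
      (hm : IsMonomial U m) : IsMonomial U (lineInt α β 0 m)

/-- `P`: the real numbers arising as length-two monomials `I_{γ,δ}(0,z)` on the real axis. -/
def projSet (U : Set ℂ) : Set ℝ :=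
  {r | ∃ γ ∈ U, ∃ δ ∈ U, γ ≠ δ ∧ γ ≠ -δ ∧ ∃ z, IsElem U z ∧ (r : ℂ) = lineInt γ δ 0 z}

/-- `m` is a `ℤ[P]`-linear combination of elementary monomials of `U`. -/
def IsZPComb (U : Set ℂ) (m : ℂ) : Prop :=
  ∃ (n : ℕ) (c : Fin n → ℝ) (z : Fin n → ℂ),
    (∀ i, c i ∈ Subring.closure (projSet U)) ∧ (∀ i, IsElem U (z i)) ∧
    m = ∑ i, (c i : ℂ) * z i

/-! ### Basic bracket lemmas -/

lemma conj_brkt (x y : ℂ) : (starRingEnd ℂ) (brkt x y) = - brkt x y := by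
  simp only [brkt, map_sub, map_mul, Complex.conj_conj]; ring

lemma brkt_swap (x y : ℂ) : brkt y x = - brkt x y := by simp only [brkt]; ring
lemma brkt_self (x : ℂ) : brkt x x = 0 := by simp [brkt]
lemma brkt_zero_right (x : ℂ) : brkt x 0 = 0 := by simp [brkt]
lemma brkt_add_right (x a b : ℂ) : brkt x (a + b) = brkt x a + brkt x b := by
  simp [brkt]; ring
lemma brkt_neg_right (x y : ℂ) : brkt x (-y) = - brkt x y := by
  simp only [brkt, map_neg]; ring
lemma brkt_smul_right (x c y : ℂ) (hc : (starRingEnd ℂ) c = c) :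
    brkt x (c * y) = c * brkt x y := by
  simp only [brkt, map_mul, hc]; ring

lemma conj_ratio (a b c d : ℂ) :
    (starRingEnd ℂ) (brkt a b / brkt c d) = brkt a b / brkt c d := by
  rw [map_div₀, conj_brkt, conj_brkt, neg_div_neg_eq]

lemma brkt_lineInt (γ α β p q : ℂ) :
    brkt γ (lineInt α β p q) =
      brkt α p / brkt α β * brkt γ β + brkt β q / brkt β α * brkt γ α := by
  rw [lineInt, brkt_add_right, brkt_smul_right _ _ _ (conj_ratio _ _ _ _),
    brkt_smul_right _ _ _ (conj_ratio _ _ _ _)]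

lemma plucker (u v z : ℂ) : brkt u z * v - brkt v z * u = brkt u v * z := by
  simp only [brkt]; ring

lemma brkt_ext {u v x y : ℂ} (huv : brkt u v ≠ 0)
    (h1 : brkt u x = brkt u y) (h2 : brkt v x = brkt v y) : x = y := by
  have hx := plucker u v x
  have hy := plucker u v y
  rw [h1, h2] at hx
  exact mul_left_cancel₀ huv (hx.symm.trans hy)

lemma unit_mul_conj {x : ℂ} (hx : ‖x‖ = 1) : x * (starRingEnd ℂ) x = 1 := by
  rw [Complex.mul_conj, ← Complex.sq_norm, hx]; norm_num

lemma brkt_ne_zero {x y : ℂ} (hx : ‖x‖ = 1) (hy : ‖y‖ = 1)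
    (h1 : x ≠ y) (h2 : x ≠ -y) : brkt x y ≠ 0 := by
  intro h
  have hx1 := unit_mul_conj hx
  have hy1 := unit_mul_conj hy
  have he : x * (starRingEnd ℂ) y = y * (starRingEnd ℂ) x := by
    simpa [brkt] using sub_eq_zero.mp h
  have ht2 : (x * (starRingEnd ℂ) y) ^ 2 = 1 := by
    calc (x * (starRingEnd ℂ) y) ^ 2
        = (x * (starRingEnd ℂ) y) * (y * (starRingEnd ℂ) x) := by rw [← he]; ring
      _ = (x * (starRingEnd ℂ) x) * (y * (starRingEnd ℂ) y) := by ring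
      _ = 1 := by rw [hx1, hy1, mul_one]
  have hfac : (x * (starRingEnd ℂ) y - 1) * (x * (starRingEnd ℂ) y + 1) = 0 := by
    linear_combination ht2
  rcases mul_eq_zero.mp hfac with hc | hc
  · apply h1
    have : x * ((starRingEnd ℂ) y * y) = 1 * y := by
      rw [one_mul]; linear_combination y * (sub_eq_zero.mp hc)
    rw [mul_comm ((starRingEnd ℂ) y) y, hy1, mul_one, one_mul] at this
    exact this
  · apply h2
    have : x * ((starRingEnd ℂ) y * y) = (-1) * y := by
      linear_combination y * (eq_neg_of_add_eq_zero_left hc)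
    rw [mul_comm ((starRingEnd ℂ) y) y, hy1, mul_one, neg_one_mul] at this
    exact this

lemma brkt_ne_swap {x y : ℂ} (h : brkt x y ≠ 0) : brkt y x ≠ 0 := by
  rw [brkt_swap]; exact neg_ne_zero.mpr h

lemma brkt_lineInt_left {α β : ℂ} (h : brkt α β ≠ 0) (p q : ℂ) :
    brkt α (lineInt α β p q) = brkt α p := by
  rw [brkt_lineInt, brkt_self, mul_zero, add_zero, div_mul_cancel₀ _ h]

lemma brkt_lineInt_right {α β : ℂ} (h : brkt β α ≠ 0) (p q : ℂ) :
    brkt β (lineInt α β p q) = brkt β q := by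
  rw [brkt_lineInt, brkt_self, mul_zero, zero_add, div_mul_cancel₀ _ h]

lemma brkt_lineInt0 (γ α β p : ℂ) :
    brkt γ (lineInt α β 0 p) = brkt β p / brkt β α * brkt γ α := by
  rw [brkt_lineInt, brkt_zero_right, zero_div, zero_mul, zero_add]

lemma hP (u v w p : ℂ) :
    brkt v w * brkt u p = brkt v p * brkt u w - brkt w p * brkt u v := by
  simp only [brkt]; ring

/-! ### The negation and addition identities -/

lemma negHalf {u v w : ℂ} (huv : brkt u v ≠ 0) (huw : brkt u w ≠ 0)
    (hvw : brkt v w ≠ 0) (p : ℂ) :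
    brkt u (lineInt w v (lineInt u v 0 p) (lineInt u w 0 p)) = - brkt u p := by
  rw [brkt_lineInt, brkt_lineInt0, brkt_lineInt0,
    brkt_swap u v, brkt_swap u w, brkt_swap v w]
  field_simp
  linear_combination hP u v w p

theorem neg_eq {u v w : ℂ} (huv : brkt u v ≠ 0) (huw : brkt u w ≠ 0)
    (hvw : brkt v w ≠ 0) (p : ℂ) :
    lineInt u v (lineInt w v (lineInt u v 0 p) (lineInt u w 0 p))
      (lineInt w u (lineInt v u 0 p) (lineInt v w 0 p)) = -p := by
  apply brkt_ext huv
  · rw [brkt_lineInt_left huv, negHalf huv huw hvw, brkt_neg_right]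
  · rw [brkt_lineInt_right (brkt_ne_swap huv), brkt_neg_right,
      negHalf (brkt_ne_swap huv) hvw huw]

lemma addHalf {u v w : ℂ} (huv : brkt u v ≠ 0) (huw : brkt u w ≠ 0)
    (hvw : brkt v w ≠ 0) (p q : ℂ) :
    brkt v (lineInt w u (lineInt u v 0 p) (lineInt w v 0 q)) = brkt v p + brkt v q := by
  rw [brkt_lineInt, brkt_lineInt0, brkt_lineInt0, brkt_swap u v, brkt_swap u w]
  field_simp

theorem add_eq {u v w : ℂ} (huv : brkt u v ≠ 0) (huw : brkt u w ≠ 0)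
    (hvw : brkt v w ≠ 0) (p q : ℂ) :
    lineInt v w (lineInt w u (lineInt u v 0 p) (lineInt w v 0 q))
      (lineInt v u (lineInt u w 0 p) (lineInt v w 0 q)) = p + q := by
  apply brkt_ext hvw
  · rw [brkt_lineInt_left hvw, addHalf huv huw hvw, brkt_add_right]
  · rw [brkt_lineInt_right (brkt_ne_swap hvw), brkt_add_right,
      addHalf huw huv (brkt_ne_swap hvw)]

/-! ### Small lineInt lemmas -/

lemma lineInt_zero_zero (α β : ℂ) : lineInt α β 0 0 = 0 := by
  simp [lineInt, brkt_zero_right]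

lemma lineInt_self {α β : ℂ} (h : brkt α β ≠ 0) (p : ℂ) : lineInt α β p p = p := by
  apply brkt_ext h
  · rw [brkt_lineInt_left h]
  · rw [brkt_lineInt_right (brkt_ne_swap h)]

lemma lineInt_split (α β p q : ℂ) :
    lineInt α β p q = lineInt β α 0 p + lineInt α β 0 q := by
  simp [lineInt, brkt_zero_right]

lemma lineInt_zero_add (α β x y : ℂ) :
    lineInt α β 0 (x + y) = lineInt α β 0 x + lineInt α β 0 y := by
  simp [lineInt, brkt_zero_right, brkt_add_right]; ring

lemma lineInt_zero_neg (α β x : ℂ) :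
    lineInt α β 0 (-x) = - lineInt α β 0 x := by
  simp [lineInt, brkt_zero_right, brkt_neg_right]; ring

/-! ### Membership lemmas for RU -/

lemma stepSet_succ {U : Set ℂ} {α β : ℂ} (hα : α ∈ U) (hβ : β ∈ U)
    (h1 : α ≠ β) (h2 : α ≠ -β) {n : ℕ} {p q : ℂ}
    (hp : p ∈ stepSet U n) (hq : q ∈ stepSet U n) :
    lineInt α β p q ∈ stepSet U (n + 1) :=
  ⟨α, hα, β, hβ, h1, h2, p, hp, q, hq, rfl⟩

lemma stepSet_le {U : Set ℂ} {α β : ℂ} (hα : α ∈ U) (hβ : β ∈ U)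
    (h1 : α ≠ β) (h2 : α ≠ -β) (hb : brkt α β ≠ 0) :
    ∀ {m n : ℕ}, m ≤ n → stepSet U m ⊆ stepSet U n := by
  intro m n h
  induction h with
  | refl => exact fun _ hz => hz
  | step _ ih =>
    intro z hz
    have := stepSet_succ hα hβ h1 h2 (ih hz) (ih hz)
    rwa [lineInt_self hb z] at this

lemma zero_mem_RU (U : Set ℂ) : (0 : ℂ) ∈ RU U :=
  Set.mem_iUnion.mpr ⟨0, Or.inl rfl⟩

lemma one_mem_RU (U : Set ℂ) : (1 : ℂ) ∈ RU U :=
  Set.mem_iUnion.mpr ⟨0, Or.inr rfl⟩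

lemma lineInt_mem_RU {U : Set ℂ} {α β : ℂ} (hα : α ∈ U) (hβ : β ∈ U)
    (h1 : α ≠ β) (h2 : α ≠ -β) (hb : brkt α β ≠ 0) {p q : ℂ}
    (hp : p ∈ RU U) (hq : q ∈ RU U) : lineInt α β p q ∈ RU U := by
  obtain ⟨m, hm⟩ := Set.mem_iUnion.mp hp
  obtain ⟨n, hn⟩ := Set.mem_iUnion.mp hq
  refine Set.mem_iUnion.mpr ⟨max m n + 1, stepSet_succ hα hβ h1 h2 ?_ ?_⟩
  · exact stepSet_le hα hβ h1 h2 hb (le_max_left m n) hm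
  · exact stepSet_le hα hβ h1 h2 hb (le_max_right m n) hn

lemma ne_neg_symm {a b : ℂ} (h : a ≠ -b) : b ≠ -a := fun hc => h (by rw [hc, neg_neg])

/-- if `U` contains three pairwise non-±-equal elements, then `R(U)` is the
set of finite integer linear combinations of monomials of `U`. -/
theorem stmt3 (U : Set ℂ) (hU : ∀ z ∈ U, ‖z‖ = 1)
    (u v w : ℂ) (hu : u ∈ U) (hv : v ∈ U) (hw : w ∈ U)
    (huv : u ≠ v) (huv' : u ≠ -v) (huw : u ≠ w) (huw' : u ≠ -w)
    (hvw : v ≠ w) (hvw' : v ≠ -w) :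
    RU U = {m | ∃ (n : ℕ) (c : Fin n → ℤ) (z : Fin n → ℂ),
      (∀ i, IsMonomial U (z i)) ∧ m = ∑ i, (c i : ℂ) * z i} := by
  have au := hU u hu
  have av := hU v hv
  have aw := hU w hw
  have buv : brkt u v ≠ 0 := brkt_ne_zero au av huv huv'
  have buw : brkt u w ≠ 0 := brkt_ne_zero au aw huw huw'
  have bvw : brkt v w ≠ 0 := brkt_ne_zero av aw hvw hvw'
  have bvu := brkt_ne_swap buv
  have bwu := brkt_ne_swap buw
  have bwv := brkt_ne_swap bvw
  have hvu : v ≠ u := huv.symm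
  have hvu' : v ≠ -u := ne_neg_symm huv'
  have hwu : w ≠ u := huw.symm
  have hwu' : w ≠ -u := ne_neg_symm huw'
  have hwv : w ≠ v := hvw.symm
  have hwv' : w ≠ -v := ne_neg_symm hvw'
  -- RU is closed under addition and negation
  have hadd : ∀ p q : ℂ, p ∈ RU U → q ∈ RU U → p + q ∈ RU U := by
    intro p q hp hq
    rw [← add_eq buv buw bvw p q]
    refine lineInt_mem_RU hv hw hvw hvw' bvw ?_ ?_
    · refine lineInt_mem_RU hw hu hwu hwu' bwu ?_ ?_
      · exact lineInt_mem_RU hu hv huv huv' buv (zero_mem_RU U) hp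
      · exact lineInt_mem_RU hw hv hwv hwv' bwv (zero_mem_RU U) hq
    · refine lineInt_mem_RU hv hu hvu hvu' bvu ?_ ?_
      · exact lineInt_mem_RU hu hw huw huw' buw (zero_mem_RU U) hp
      · exact lineInt_mem_RU hv hw hvw hvw' bvw (zero_mem_RU U) hq
  have hneg : ∀ p : ℂ, p ∈ RU U → -p ∈ RU U := by
    intro p hp
    rw [← neg_eq buv buw bvw p]
    refine lineInt_mem_RU hu hv huv huv' buv ?_ ?_
    · refine lineInt_mem_RU hw hv hwv hwv' bwv ?_ ?_
      · exact lineInt_mem_RU hu hv huv huv' buv (zero_mem_RU U) hp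
      · exact lineInt_mem_RU hu hw huw huw' buw (zero_mem_RU U) hp
    · refine lineInt_mem_RU hw hu hwu hwu' bwu ?_ ?_
      · exact lineInt_mem_RU hv hu hvu hvu' bvu (zero_mem_RU U) hp
      · exact lineInt_mem_RU hv hw hvw hvw' bvw (zero_mem_RU U) hp
  -- monomials lie in RU
  have hmono : ∀ m : ℂ, IsMonomial U m → m ∈ RU U := by
    intro m hm
    induction hm with
    | elementary α β hα hβ h1 h2 =>
      exact lineInt_mem_RU hα hβ h1 h2 (brkt_ne_zero (hU _ hα) (hU _ hβ) h1 h2)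
        (zero_mem_RU U) (one_mem_RU U)
    | step α β m hα hβ h1 h2 hm ih =>
      exact lineInt_mem_RU hα hβ h1 h2 (brkt_ne_zero (hU _ hα) (hU _ hβ) h1 h2)
        (zero_mem_RU U) ih
  -- the closure of monomials is stable under z ↦ lineInt α β 0 z
  have fmap : ∀ α β : ℂ, α ∈ U → β ∈ U → α ≠ β → α ≠ -β → ∀ x : ℂ,
      x ∈ AddSubgroup.closure {z | IsMonomial U z} →
      lineInt α β 0 x ∈ AddSubgroup.closure {z | IsMonomial U z} := by
    intro α β hα hβ h1 h2 x hx
    refine AddSubgroup.closure_induction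
      (fun m hm => AddSubgroup.subset_closure (IsMonomial.step α β m hα hβ h1 h2 hm))
      (by rw [lineInt_zero_zero]; exact zero_mem _)
      (fun a b _ _ iha ihb => by rw [lineInt_zero_add]; exact add_mem iha ihb)
      (fun a _ ih => by rw [lineInt_zero_neg]; exact neg_mem ih) hx
  -- RU = closure of monomials
  have hRG : RU U = (AddSubgroup.closure {z | IsMonomial U z} : Set ℂ) := by
    apply Set.Subset.antisymm
    · intro z hz
      obtain ⟨n, hn⟩ := Set.mem_iUnion.mp hz
      clear hz
      induction n generalizing z with
      | zero =>
        rcases hn with rfl | rfl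
        · exact zero_mem _
        · have h1 : (1 : ℂ) = lineInt v u 0 1 + lineInt u v 0 1 := by
            rw [← lineInt_split]; exact (lineInt_self buv 1).symm
          rw [h1]
          exact add_mem
            (AddSubgroup.subset_closure (IsMonomial.elementary v u hv hu hvu hvu'))
            (AddSubgroup.subset_closure (IsMonomial.elementary u v hu hv huv huv'))
      | succ n ih =>
        obtain ⟨α, hα, β, hβ, h1, h2, p, hp, q, hq, rfl⟩ := hn
        rw [lineInt_split]
        exact add_mem (fmap β α hβ hα h1.symm (ne_neg_symm h2) p (ih hp))
          (fmap α β hα hβ h1 h2 q (ih hq))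
    · intro z hz
      refine AddSubgroup.closure_induction
        (fun m hm => hmono m hm) (zero_mem_RU U)
        (fun a b _ _ iha ihb => hadd a b iha ihb)
        (fun a _ ih => hneg a ih) hz
  rw [hRG]
  apply Set.Subset.antisymm
  · intro m hm
    refine AddSubgroup.closure_induction
      (fun m hm => ⟨1, fun _ => 1, fun _ => m, fun _ => hm, by simp⟩)
      ⟨0, fun i => i.elim0, fun i => i.elim0, fun i => i.elim0, by simp⟩
      ?_ ?_ hm
    · rintro a b _ _ ⟨n1, c1, z1, hz1, e1⟩ ⟨n2, c2, z2, hz2, e2⟩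
      refine ⟨n1 + n2, Fin.append c1 c2, Fin.append z1 z2, ?_, ?_⟩
      · intro i
        refine Fin.addCases (fun j => ?_) (fun j => ?_) i
        · rw [Fin.append_left]; exact hz1 j
        · rw [Fin.append_right]; exact hz2 j
      · rw [Fin.sum_univ_add]
        simp only [Fin.append_left, Fin.append_right]
        rw [e1, e2]
    · rintro a _ ⟨n, c, z, hz, e⟩
      refine ⟨n, fun i => -(c i), z, hz, ?_⟩
      rw [e, ← Finset.sum_neg_distrib]
      apply Finset.sum_congr rfl
      intro i _
      push_cast
      ring
  · rintro m ⟨n, c, z, hzm, rfl⟩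
    refine sum_mem fun i _ => ?_
    rw [show ((c i : ℂ)) * z i = (c i) • z i from (zsmul_eq_mul _ _).symm]
    exact zsmul_mem (AddSubgroup.subset_closure (hzm i)) (c i)
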